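/- Let n ≥ 1 be an integer, 0 < α < 1, and let f be real-analytic on [0,∞) with f^{(k)}(x) = O(x^{n-α-ε-k}) as x → ∞ for all 0 ≤ k ≤ n and some ε > 0. Then the limit as ε ↓ 0 of ( ∫_ε^∞ x^{α-1-n} f(x) dx − ∑_{k=0}^{n-1} ε^{α-n+k} f^{(k)}(0)/(k!(n-α-k)) ) exists and is finite. -/

import Mathlib

open MeasureTheory Real Set Filter Topology Asymptotics

private lemma coeff_eq_aux (f : ℝ → ℝ) {p : FormalMultilinearSeries ℝ ℝ ℝ}
    (hp : HasFPowerSeriesAt f p 0) (k : ℕ) :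
    p.coeff k = iteratedDeriv k f 0 / k.factorial := by
  obtain ⟨r, hball⟩ := hp
  have h := hball.factorial_smul (1 : ℝ) k
  have h2 : (k.factorial : ℝ) * p.coeff k = iteratedDeriv k f 0 := by
    rw [iteratedDeriv_eq_iteratedFDeriv, ← h, nsmul_eq_mul]
    rfl
  have hk : (k.factorial : ℝ) ≠ 0 := Nat.cast_ne_zero.mpr k.factorial_ne_zero
  field_simp [← h2]
  rw [mul_comm]; exact h2

private lemma taylor_remainder_isBigO (n : ℕ) (f : ℝ → ℝ) (hf : AnalyticAt ℝ f 0) :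
    (fun x : ℝ => f x - ∑ k ∈ Finset.range n,
      iteratedDeriv k f 0 / k.factorial * x ^ k) =O[𝓝 0] fun x : ℝ => x ^ n := by
  obtain ⟨p, hp⟩ := hf
  have h := hp.isBigO_sub_partialSum_pow n
  simp only [zero_add] at h
  have h2 : (fun x : ℝ => f x - ∑ k ∈ Finset.range n,
      iteratedDeriv k f 0 / k.factorial * x ^ k) = fun x => f x - p.partialSum n x := by
    funext x
    unfold FormalMultilinearSeries.partialSum
    refine congrArg _ (Finset.sum_congr rfl fun k _ => ?_)
    rw [FormalMultilinearSeries.apply_eq_pow_smul_coeff, coeff_eq_aux f hp k, smul_eq_mul]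
    ring
  rw [h2]
  simp only [← norm_pow] at h
  exact h.of_norm_right

theorem stmt_3 (n : ℕ) (hn : 1 ≤ n) (α : ℝ) (hα0 : 0 < α) (hα1 : α < 1)
    (f : ℝ → ℝ) (hf : ∀ x ∈ Ici (0 : ℝ), AnalyticAt ℝ f x)
    (ε : ℝ) (hε : 0 < ε)
    (hdecay : ∀ k ≤ n,
      (iteratedDeriv k f) =O[atTop] fun x : ℝ => x ^ ((n : ℝ) - α - ε - k)) :
    ∃ L : ℝ, Tendsto
      (fun e : ℝ => (∫ x in Ioi e, x ^ (α - 1 - n) * f x) -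
        ∑ k ∈ Finset.range n,
          e ^ (α - n + k) * iteratedDeriv k f 0 / ((k.factorial : ℝ) * ((n : ℝ) - α - k)))
      (𝓝[>] 0) (𝓝 L) := by
  set c : ℕ → ℝ := fun k => iteratedDeriv k f 0 / k.factorial with hc
  set P : ℝ → ℝ := fun x => ∑ k ∈ Finset.range n, c k * x ^ k with hPdef
  set G : ℝ → ℝ := fun x => x ^ (α - 1 - (n:ℝ)) * (f x - P x) with hGdef
  set H : ℝ → ℝ := fun x => x ^ (α - 1 - (n:ℝ)) * f x with hHdef
  -- continuity
  have hfc : ∀ x ∈ Ioi (0:ℝ), ContinuousAt f x := fun x hx => (hf x (le_of_lt (show (0:ℝ) < x from hx))).continuousAt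
  have hrc : ∀ (r : ℝ) (x : ℝ), x ∈ Ioi (0:ℝ) → ContinuousAt (fun y : ℝ => y ^ r) x := by
    intro r x hx
    exact continuousAt_rpow_const x r (Or.inl (ne_of_gt hx))
  have hHc : ∀ x ∈ Ioi (0:ℝ), ContinuousAt H x := by
    intro x hx
    exact ((hrc _ x hx).mul (hfc x hx))
  have hGc : ∀ x ∈ Ioi (0:ℝ), ContinuousAt G x := by
    intro x hx
    exact ((hrc _ x hx).mul ((hfc x hx).sub (by fun_prop)))
  -- continuous on Ioi 0 implies integrable on compact Ioc a b, a > 0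
  have hcpt : ∀ (F : ℝ → ℝ), (∀ x ∈ Ioi (0:ℝ), ContinuousAt F x) →
      ∀ a b : ℝ, 0 < a → IntegrableOn F (Ioc a b) := by
    intro F hF a b ha
    have : ContinuousOn F (Icc a b) := fun x hx =>
      (hF x (lt_of_lt_of_le ha hx.1)).continuousWithinAt
    exact this.integrableOn_Icc.mono_set Ioc_subset_Icc_self
  -- tail integrability
  have hint_tail : IntegrableOn H (Ioi 1) := by
    have h0 := hdecay 0 (Nat.zero_le n)
    rw [iteratedDeriv_zero] at h0
    obtain ⟨C, hC0, hC⟩ := h0.exists_pos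
    rw [IsBigOWith] at hC
    obtain ⟨R₀, hR₀⟩ := eventually_atTop.mp hC
    set R : ℝ := max R₀ 1 with hRdef
    have hR1 : (1:ℝ) ≤ R := le_max_right _ _
    have hR0 : (0:ℝ) < R := lt_of_lt_of_le one_pos hR1
    have htail : IntegrableOn H (Ioi R) := by
      refine Integrable.mono' (g := fun x => C * x ^ (-1 - ε)) ?_ ?_ ?_
      · exact (integrableOn_Ioi_rpow_of_lt (by linarith) hR0).const_mul C
      · exact ContinuousOn.aestronglyMeasurable
          (fun x hx => (hHc x (lt_trans hR0 hx)).continuousWithinAt) measurableSet_Ioi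
      · filter_upwards [ae_restrict_mem measurableSet_Ioi] with x hx
        have hxR : R < x := hx
        have hx0 : (0:ℝ) < x := lt_trans hR0 hxR
        have hb := hR₀ x (le_of_lt (lt_of_le_of_lt (le_max_left _ _) hxR))
        have hnorm : ‖x ^ ((n:ℝ) - α - ε - (0:ℕ))‖ = x ^ ((n:ℝ) - α - ε) := by
          rw [Real.norm_eq_abs, abs_of_nonneg (rpow_nonneg hx0.le _)]
          norm_num
        rw [hnorm] at hb
        have : ‖H x‖ = x ^ (α - 1 - (n:ℝ)) * ‖f x‖ := by
          rw [hHdef]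
          simp only [Real.norm_eq_abs, abs_mul, abs_of_nonneg (rpow_nonneg hx0.le _)]
        rw [this]
        calc x ^ (α - 1 - (n:ℝ)) * ‖f x‖ ≤ x ^ (α - 1 - (n:ℝ)) * (C * x ^ ((n:ℝ) - α - ε)) :=
              mul_le_mul_of_nonneg_left hb (rpow_nonneg hx0.le _)
          _ = C * x ^ (-1 - ε) := by
              rw [mul_left_comm, ← Real.rpow_add hx0]
              exact mul_eq_mul_left_iff.mpr (Or.inl (by congr 1; ring))
    have hmid : IntegrableOn H (Ioc 1 R) := hcpt H hHc 1 R one_pos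
    have := hmid.union htail
    rwa [Ioc_union_Ioi_eq_Ioi hR1] at this
  -- integrability of G near 0
  have hint_G : IntegrableOn G (Ioc 0 1) := by
    have hO : (fun x => f x - P x) =O[𝓝 0] fun x : ℝ => x ^ n :=
      taylor_remainder_isBigO n f (hf 0 (self_mem_Ici))
    obtain ⟨C, hC0, hC⟩ := hO.exists_pos
    rw [IsBigOWith] at hC
    obtain ⟨δ₀, hδ₀, hδ⟩ := Metric.eventually_nhds_iff.mp hC
    set δ : ℝ := min (δ₀ / 2) 1 with hδdef
    have hδpos : 0 < δ := lt_min (by linarith) one_pos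
    have hδ1 : δ ≤ 1 := min_le_right _ _
    have hsmall : IntegrableOn G (Ioc 0 δ) := by
      refine Integrable.mono' (g := fun x => C * x ^ (α - 1)) ?_ ?_ ?_
      · exact ((intervalIntegral.intervalIntegrable_rpow' (by linarith)).1).const_mul C
      · exact ContinuousOn.aestronglyMeasurable
          (fun x hx => (hGc x hx.1).continuousWithinAt) measurableSet_Ioc
      · filter_upwards [ae_restrict_mem measurableSet_Ioc] with x hx
        have hx0 : (0:ℝ) < x := hx.1
        have hxδ : dist x 0 < δ₀ := by
          rw [Real.dist_eq, sub_zero, abs_of_pos hx0]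
          calc x ≤ δ := hx.2
            _ ≤ δ₀ / 2 := min_le_left _ _
            _ < δ₀ := by linarith
        have hb := hδ hxδ
        have hnorm : ‖(fun x : ℝ => x ^ n) x‖ = x ^ (n:ℝ) := by
          rw [Real.norm_eq_abs, abs_pow, abs_of_pos hx0, ← Real.rpow_natCast]
        have hGx : ‖G x‖ = x ^ (α - 1 - (n:ℝ)) * ‖f x - P x‖ := by
          rw [hGdef]
          simp only [Real.norm_eq_abs, abs_mul, abs_of_nonneg (rpow_nonneg hx0.le _)]
        rw [hGx]
        calc x ^ (α - 1 - (n:ℝ)) * ‖f x - P x‖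
            ≤ x ^ (α - 1 - (n:ℝ)) * (C * ‖x ^ n‖) :=
              mul_le_mul_of_nonneg_left hb (rpow_nonneg hx0.le _)
          _ = C * x ^ (α - 1) := by
              rw [Real.norm_eq_abs, abs_pow, abs_of_pos hx0, ← Real.rpow_natCast x n,
                mul_left_comm, ← Real.rpow_add hx0]
              exact mul_eq_mul_left_iff.mpr (Or.inl (by congr 1; ring))
    have hmid : IntegrableOn G (Ioc δ 1) := hcpt G hGc δ 1 hδpos
    have := hsmall.union hmid
    rwa [Ioc_union_Ioc_eq_Ioc hδpos.le hδ1] at this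
  -- value of power integrals
  have hpow_val : ∀ k, k < n → ∀ e : ℝ, 0 < e → e ≤ 1 →
      (∫ x in Ioc e 1, x ^ (α - 1 - (n:ℝ) + k)) =
        (1 - e ^ (α - (n:ℝ) + k)) / (α - (n:ℝ) + k) := by
    intro k hk e he0 he1
    have hkn : (k:ℝ) + 1 ≤ (n:ℝ) := by exact_mod_cast hk
    have hne : α - 1 - (n:ℝ) + k ≠ -1 := by intro h; nlinarith
    have h0 : (0:ℝ) ∉ uIcc e 1 := fun h => (not_le.mpr he0) ((uIcc_of_le he1 ▸ h).1)
    rw [← intervalIntegral.integral_of_le he1, integral_rpow (Or.inr ⟨hne, h0⟩),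
      show α - 1 - (n:ℝ) + k + 1 = α - (n:ℝ) + k by ring, one_rpow]
  set A : ℝ := ∫ x in Ioc (0:ℝ) 1, G x with hA
  set B : ℝ := ∫ x in Ioi (1:ℝ), H x with hB
  set S : ℝ := ∑ k ∈ Finset.range n, c k / ((n:ℝ) - α - k) with hS
  -- the key identity for e ∈ (0,1)
  have hid : ∀ e ∈ Ioo (0:ℝ) 1,
      (∫ x in Ioi e, x ^ (α - 1 - (n:ℝ)) * f x) -
        (∑ k ∈ Finset.range n,
          e ^ (α - (n:ℝ) + k) * iteratedDeriv k f 0 / ((k.factorial : ℝ) * ((n : ℝ) - α - k)))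
      = (∫ x in Ioc e 1, G x) + B - S := by
    intro e he
    have he0 := he.1
    have he1 := he.2.le
    have hIf : IntegrableOn (fun x => x ^ (α - 1 - (n:ℝ)) * f x) (Ioc e 1) := hcpt H hHc e 1 he0
    have hsplit : (∫ x in Ioi e, x ^ (α - 1 - (n:ℝ)) * f x)
        = (∫ x in Ioc e 1, x ^ (α - 1 - (n:ℝ)) * f x) + B := by
      rw [hB, ← setIntegral_union (Ioc_disjoint_Ioi le_rfl) measurableSet_Ioi hIf hint_tail,
        Ioc_union_Ioi_eq_Ioi he1]
    have hintpow : ∀ k : ℕ, IntegrableOn (fun x : ℝ => c k * x ^ (α - 1 - (n:ℝ) + k)) (Ioc e 1) :=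
      fun k => (hcpt (fun x : ℝ => x ^ (α - 1 - (n:ℝ) + k)) (fun x hx => hrc _ x hx) e 1 he0).const_mul _
    have hmid : (∫ x in Ioc e 1, x ^ (α - 1 - (n:ℝ)) * f x)
        = (∫ x in Ioc e 1, G x) +
          ∑ k ∈ Finset.range n, c k * ((1 - e ^ (α - (n:ℝ) + k)) / (α - (n:ℝ) + k)) := by
      have hptwise : ∀ x ∈ Ioc e 1, x ^ (α - 1 - (n:ℝ)) * f x
          = G x + ∑ k ∈ Finset.range n, c k * x ^ (α - 1 - (n:ℝ) + k) := by
        intro x hx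
        have hx0 : (0:ℝ) < x := lt_trans he0 hx.1
        have hPx : x ^ (α - 1 - (n:ℝ)) * P x
            = ∑ k ∈ Finset.range n, c k * x ^ (α - 1 - (n:ℝ) + k) := by
          rw [hPdef]
          simp only
          rw [Finset.mul_sum]
          refine Finset.sum_congr rfl fun k _ => ?_
          rw [Real.rpow_add hx0, Real.rpow_natCast]
          ring
        calc x ^ (α - 1 - (n:ℝ)) * f x
            = x ^ (α - 1 - (n:ℝ)) * (f x - P x) + x ^ (α - 1 - (n:ℝ)) * P x := by ring
          _ = G x + ∑ k ∈ Finset.range n, c k * x ^ (α - 1 - (n:ℝ) + k) := by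
              rw [hPx, hGdef]
      rw [setIntegral_congr_fun measurableSet_Ioc hptwise,
        integral_add (hint_G.mono_set (Ioc_subset_Ioc he0.le le_rfl))
          (integrable_finset_sum _ fun k _ => hintpow k),
        integral_finset_sum _ fun k _ => hintpow k]
      congr 1
      refine Finset.sum_congr rfl fun k hk => ?_
      rw [integral_const_mul, hpow_val k (Finset.mem_range.mp hk) e he0 he1]
    have hterm : ∀ k ∈ Finset.range n,
        c k * ((1 - e ^ (α - (n:ℝ) + k)) / (α - (n:ℝ) + k))
          - e ^ (α - (n:ℝ) + k) * iteratedDeriv k f 0 / ((k.factorial : ℝ) * ((n : ℝ) - α - k))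
        = -(c k / ((n:ℝ) - α - k)) := by
      intro k hk
      have hkn : (k:ℝ) + 1 ≤ (n:ℝ) := by exact_mod_cast Finset.mem_range.mp hk
      have hM : (0:ℝ) < (n:ℝ) - α - k := by linarith
      have hfac : (k.factorial : ℝ) ≠ 0 := Nat.cast_ne_zero.mpr k.factorial_ne_zero
      have hr : α - (n:ℝ) + k = -((n:ℝ) - α - k) := by ring
      have key : ∀ (D F M E : ℝ), F ≠ 0 → M ≠ 0 →
          D / F * ((1 - E) / (-M)) - E * D / (F * M) = -(D / F / M) := by
        intro D F M E hF hM
        field_simp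
        ring
      rw [hc]
      simp only
      rw [hr]
      exact key (iteratedDeriv k f 0) _ _ _ hfac (ne_of_gt hM)
    have hsum : (∑ k ∈ Finset.range n, c k * ((1 - e ^ (α - (n:ℝ) + k)) / (α - (n:ℝ) + k)))
        - (∑ k ∈ Finset.range n,
            e ^ (α - (n:ℝ) + k) * iteratedDeriv k f 0 / ((k.factorial : ℝ) * ((n : ℝ) - α - k)))
        = -S := by
      rw [← Finset.sum_sub_distrib, Finset.sum_congr rfl hterm, hS, ← Finset.sum_neg_distrib]
    rw [hsplit, hmid]
    linarith
  -- convergence of the small integral to zero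
  have hGmeas : AEStronglyMeasurable G (volume.restrict (Ioc (0:ℝ) 1)) :=
    hint_G.aestronglyMeasurable
  have hzero : Tendsto (fun e : ℝ => ∫ x in Ioc (0:ℝ) e, G x) (𝓝[>] 0) (𝓝 0) := by
    have key : Tendsto (fun e : ℝ => ∫ x in Ioc (0:ℝ) 1, (Ioc (0:ℝ) e).indicator G x) (𝓝[>] 0)
        (𝓝 (∫ x in Ioc (0:ℝ) 1, (0:ℝ))) := by
      refine tendsto_integral_filter_of_dominated_convergence (fun x => ‖G x‖) ?_ ?_ hint_G.norm ?_
      · exact Eventually.of_forall fun e => hGmeas.indicator measurableSet_Ioc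
      · exact Eventually.of_forall fun e =>
          Eventually.of_forall fun x => norm_indicator_le_norm_self G x
      · filter_upwards [ae_restrict_mem measurableSet_Ioc] with x hx
        refine tendsto_const_nhds.congr' ?_
        filter_upwards [Ioo_mem_nhdsGT_of_mem (⟨le_refl (0:ℝ), hx.1⟩ : (0:ℝ) ∈ Ico (0:ℝ) x)]
          with e he
        exact (indicator_of_notMem (fun hmem => absurd hmem.2 (not_le.mpr he.2)) G).symm
    simp only [integral_zero] at key
    refine key.congr' ?_
    filter_upwards [Ioo_mem_nhdsGT_of_mem (⟨le_refl (0:ℝ), one_pos⟩ : (0:ℝ) ∈ Ico (0:ℝ) 1)]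
      with e he
    rw [integral_indicator measurableSet_Ioc, Measure.restrict_restrict measurableSet_Ioc,
      Ioc_inter_Ioc, max_self, min_eq_left he.2.le]
  -- convergence of the middle integral
  have h1 : Tendsto (fun e : ℝ => ∫ x in Ioc e 1, G x) (𝓝[>] 0) (𝓝 A) := by
    have hev : ∀ᶠ e in 𝓝[>] (0:ℝ),
        A - (∫ x in Ioc (0:ℝ) e, G x) = ∫ x in Ioc e 1, G x := by
      filter_upwards [Ioo_mem_nhdsGT_of_mem (⟨le_refl (0:ℝ), one_pos⟩ : (0:ℝ) ∈ Ico (0:ℝ) 1)]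
        with e he
      have hAeq : A = (∫ x in Ioc (0:ℝ) e, G x) + ∫ x in Ioc e 1, G x := by
        rw [hA, ← setIntegral_union (Ioc_disjoint_Ioc.mpr ((min_le_left e 1).trans (le_max_right 0 e))) measurableSet_Ioc
          (hint_G.mono_set (Ioc_subset_Ioc le_rfl he.2.le))
          (hint_G.mono_set (Ioc_subset_Ioc he.1.le le_rfl)),
          Ioc_union_Ioc_eq_Ioc he.1.le he.2.le]
      linarith
    have h2 : Tendsto (fun e : ℝ => A - ∫ x in Ioc (0:ℝ) e, G x) (𝓝[>] 0) (𝓝 A) := by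
      simpa using tendsto_const_nhds.sub hzero
    exact h2.congr' hev
  refine ⟨A + B - S, ?_⟩
  have hfinal : Tendsto (fun e : ℝ => (∫ x in Ioc e 1, G x) + B - S) (𝓝[>] 0) (𝓝 (A + B - S)) :=
    (h1.add_const B).sub_const S
  refine hfinal.congr' ?_
  filter_upwards [Ioo_mem_nhdsGT_of_mem (⟨le_refl (0:ℝ), one_pos⟩ : (0:ℝ) ∈ Ico (0:ℝ) 1)]
    with e he
  exact (hid e he).symm
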